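/- Let (P,R,g) be an OPS instance and let S be a valid schedule. Then there exists a valid schedule S' such that for every day t, S'(t) is an inclusion-maximal matching of (P,R) with S(t) ⊆ S'(t), and the heat satisfies h(S') ≤ h(S). Moreover, for any frequency function f : R → ℕ, if S is a valid schedule for the DPS instance (P,R,f) then so is S'. -/
import Mathlib


open scoped ENNReal BigOperators

namespace PolySched

variable {V : Type*}

/-- A set of edges is a matching in `G`: all edges belong to `G` and no two
distinct edges share an endpoint. -/
def IsMatchingIn (G : SimpleGraph V) (M : Set (Sym2 V)) : Prop :=
  M ⊆ G.edgeSet ∧ M.Pairwise fun e e' => ∀ v, v ∈ e → v ∉ e'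

/-- A schedule is valid for the OPS instance on `G` if each day is a matching. -/
def OPSValid (G : SimpleGraph V) (S : ℕ → Set (Sym2 V)) : Prop :=
  ∀ t, IsMatchingIn G (S t)

/-- A schedule is valid for the DPS instance `(G, f)`. -/
def DPSValid (G : SimpleGraph V) (f : Sym2 V → ℕ) (S : ℕ → Set (Sym2 V)) : Prop :=
  OPSValid G S ∧ ∀ e ∈ G.edgeSet, ∀ t : ℕ, ∃ i < f e, e ∈ S (t + i)

/-- Recurrence time of edge `e` under schedule `S`: the supremum of `d+1` over
all `d` such that some window of `d` consecutive days misses `e`. -/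
noncomputable def recTime (S : ℕ → Set (Sym2 V)) (e : Sym2 V) : ℝ≥0∞ :=
  ⨆ d ∈ {d : ℕ | ∃ t : ℕ, ∀ i < d, e ∉ S (t + i)}, ((d : ℝ≥0∞) + 1)

/-- Heat of a schedule for the OPS instance `(G, g)`. -/
noncomputable def heat (G : SimpleGraph V) (g : Sym2 V → ℝ) (S : ℕ → Set (Sym2 V)) : ℝ≥0∞ :=
  ⨆ e ∈ G.edgeSet, ENNReal.ofReal (g e) * recTime S e
lemma exists_maximal_matching (G : SimpleGraph V) (M0 : Set (Sym2 V))
    (h0 : IsMatchingIn G M0) :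
    ∃ M, M0 ⊆ M ∧ IsMatchingIn G M ∧
      ∀ N, IsMatchingIn G N → M ⊆ N → N = M := by
  obtain ⟨m, hm0, hmax⟩ := zorn_subset_nonempty {M | IsMatchingIn G M}
    (fun c hc hchain hne => by
      refine ⟨⋃₀ c, ⟨?_, ?_⟩, fun s hs => Set.subset_sUnion_of_mem hs⟩
      · rintro e ⟨A, hA, heA⟩
        exact (hc hA).1 heA
      · rintro e ⟨A, hA, heA⟩ e' ⟨B, hB, heB⟩ hne' v hv
        rcases hchain.total hA hB with h | h
        · exact (hc hB).2 (h heA) heB hne' v hv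
        · exact (hc hA).2 heA (h heB) hne' v hv) M0 h0
  exact ⟨m, hm0, hmax.1, fun N hN hmn => subset_antisymm (hmax.2 hN hmn) hmn⟩

lemma recTime_mono {S S' : ℕ → Set (Sym2 V)} (h : ∀ t, S t ⊆ S' t) (e : Sym2 V) :
    recTime S' e ≤ recTime S e := by
  refine iSup₂_le fun d hd => ?_
  obtain ⟨t, ht⟩ := hd
  exact le_iSup₂ (f := fun d (_ : d ∈ {d : ℕ | ∃ t : ℕ, ∀ i < d, e ∉ S (t + i)}) =>
    ((d : ℝ≥0∞) + 1)) d ⟨t, fun i hi hmem => ht i hi (h _ hmem)⟩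

/-- Any valid schedule can be completed to one using
inclusion-maximal matchings each day, without increasing the heat, and
preserving validity for any DPS instance. -/
theorem complete_to_maximal_matchings {V : Type*} (G : SimpleGraph V)
    (g : Sym2 V → ℝ) (hg : ∀ e ∈ G.edgeSet, 0 < g e)
    (S : ℕ → Set (Sym2 V)) (hS : OPSValid G S) :
    ∃ S' : ℕ → Set (Sym2 V),
      (∀ t, S t ⊆ S' t ∧ IsMatchingIn G (S' t) ∧
        ∀ M : Set (Sym2 V), IsMatchingIn G M → S' t ⊆ M → M = S' t) ∧
      heat G g S' ≤ heat G g S ∧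
      (∀ f : Sym2 V → ℕ, (∀ e ∈ G.edgeSet, 0 < f e) →
        DPSValid G f S → DPSValid G f S') := by
  choose S' hsub hmatch hmax using fun t => exists_maximal_matching G (S t) (hS t)
  refine ⟨S', fun t => ⟨hsub t, hmatch t, hmax t⟩, ?_, ?_⟩
  · exact iSup₂_mono fun e he =>
      mul_le_mul_right (recTime_mono hsub e) _
  · rintro f _ ⟨_, hocc⟩
    exact ⟨hmatch, fun e he t => by
      obtain ⟨i, hi, hmem⟩ := hocc e he t
      exact ⟨i, hi, hsub _ hmem⟩⟩

end PolySched
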